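/- Let α(t) = c₀(1+t)^β with c₀ > 0, β ∈ (−1,1), and Λ(s) = ∫_s^∞ e^{−∫_s^t α(u)du} dt. Then ε² ∫_0^{T/ε} Λ(s) ds ≍ ε^{1+β} as ε → 0 for each fixed T > 0; that is, there exist constants 0 < c₁ ≤ c₂ (depending on T, c₀, β) with c₁ ε^{1+β} ≤ ε² ∫_0^{T/ε} Λ(s) ds ≤ c₂ ε^{1+β} for all ε ∈ (0,1]. -/

import Mathlib

open MeasureTheory Filter Set Real



section Aux
variable {c₀ β : ℝ} (hc₀ : 0 < c₀) (hβ1 : -1 < β) (hβ2 : β < 1)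

/-- antiderivative -/
noncomputable def Fa (c₀ β : ℝ) : ℝ → ℝ := fun t => c₀ / (1 + β) * (1 + t) ^ (1 + β)

lemma hasDerivAt_Fa (hβ1 : -1 < β) {t : ℝ} (ht : -1 < t) :
    HasDerivAt (Fa c₀ β) (c₀ * (1 + t) ^ β) t := by
  have h1 : (0:ℝ) < 1 + t := by linarith
  have h := (((hasDerivAt_id t).const_add 1).rpow_const (p := 1 + β) (Or.inl h1.ne'))
  have h2 := h.const_mul (c₀ / (1 + β))
  refine h2.congr_deriv ?_
  have : 1 + β - 1 = β := by ring
  rw [this]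
  simp only [id_eq]
  have hne : (1:ℝ) + β ≠ 0 := by linarith
  field_simp

lemma contOn_alpha {s r : ℝ} (hs : 0 ≤ s) :
    ContinuousOn (fun u : ℝ => c₀ * (1 + u) ^ β) (Icc s r) := by
  apply ContinuousOn.mul continuousOn_const
  apply ContinuousOn.rpow_const (by fun_prop)
  intro x hx
  exact Or.inl (by nlinarith [hx.1])

lemma inner_eq (hβ1 : -1 < β) {s r : ℝ} (hs : 0 ≤ s) (hr : s ≤ r) :
    (∫ u in s..r, c₀ * (1 + u) ^ β) = Fa c₀ β r - Fa c₀ β s := by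
  apply intervalIntegral.integral_eq_sub_of_hasDerivAt
  · intro x hx
    rw [uIcc_of_le hr] at hx
    exact hasDerivAt_Fa hβ1 (by nlinarith [hx.1])
  · rw [intervalIntegrable_iff_integrableOn_Icc_of_le hr]
    exact ((contOn_alpha hs).integrableOn_compact isCompact_Icc)

end Aux


section Aux2
variable {c₀ β : ℝ}




lemma alpha_intble {s r : ℝ} (hs : 0 ≤ s) (hr : s ≤ r) :
    IntervalIntegrable (fun u : ℝ => c₀ * (1 + u) ^ β) volume s r := by
  rw [intervalIntegrable_iff_integrableOn_Icc_of_le hr]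
  exact (contOn_alpha hs).integrableOn_compact isCompact_Icc

lemma core_lower (hc₀ : 0 < c₀) (hβ1 : -1 < β) {s r : ℝ} (hs : 0 ≤ s) (hr : s ≤ r) :
    c₀ * min ((1+s) ^ β) ((1+r) ^ β) * (r - s) ≤ Fa c₀ β r - Fa c₀ β s := by
  rw [← inner_eq hβ1 hs hr]
  have hpt : ∀ u ∈ Icc s r,
      (fun _ : ℝ => c₀ * min ((1+s) ^ β) ((1+r) ^ β)) u ≤ c₀ * (1 + u) ^ β := by
    intro u hu
    have h1s : (0:ℝ) < 1 + s := by linarith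
    have h1u : (0:ℝ) < 1 + u := by nlinarith [hu.1]
    have hmin : min ((1+s) ^ β) ((1+r) ^ β) ≤ (1+u) ^ β := by
      rcases le_or_gt 0 β with hb | hb
      · exact le_trans (min_le_left _ _) (rpow_le_rpow h1s.le (by linarith [hu.1]) hb)
      · refine le_trans (min_le_right _ _) ?_
        exact rpow_le_rpow_of_nonpos h1u (by linarith [hu.2]) hb.le
    exact mul_le_mul_of_nonneg_left hmin hc₀.le
  have h := intervalIntegral.integral_mono_on (μ := volume) hr
    intervalIntegrable_const (alpha_intble hs hr) hpt
  calc c₀ * min ((1+s) ^ β) ((1+r) ^ β) * (r - s)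
      = ∫ _ in s..r, c₀ * min ((1+s) ^ β) ((1+r) ^ β) := by
        rw [intervalIntegral.integral_const]; simp [smul_eq_mul]; ring
    _ ≤ _ := h

lemma inner_le (hc₀ : 0 < c₀) (hβ1 : -1 < β) (hβ2 : β < 1) {s r : ℝ} (hs : 0 ≤ s)
    (hr1 : s ≤ r) (hr2 : r ≤ s + (1+s) ^ (-β)) :
    Fa c₀ β r - Fa c₀ β s ≤ 2 * c₀ := by
  rw [← inner_eq hβ1 hs hr1]
  have h1s : (0:ℝ) < 1 + s := by linarith
  have hpt : ∀ u ∈ Icc s r,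
      c₀ * (1 + u) ^ β ≤ (fun _ : ℝ => c₀ * (2 * (1+s) ^ β)) u := by
    intro u hu
    have h1u : (0:ℝ) < 1 + u := by nlinarith [hu.1]
    have key : (1+u) ^ β ≤ 2 * (1+s) ^ β := by
      rcases le_or_gt β 0 with hb | hb
      · have h2 := rpow_le_rpow_of_nonpos (x := 1+s) (y := 1+u) h1s
          (by linarith [hu.1]) hb
        nlinarith [rpow_pos_of_pos h1s β]
      · have hδ : (1+s) ^ (-β) ≤ 1 :=
          rpow_le_one_of_one_le_of_nonpos (by linarith) (by linarith)
        have h2 : 1 + u ≤ 2 * (1 + s) := by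
          have := hu.2; nlinarith
        calc (1+u) ^ β ≤ (2 * (1+s)) ^ β := rpow_le_rpow h1u.le h2 hb.le
          _ = 2 ^ β * (1+s) ^ β := mul_rpow (by norm_num) h1s.le
          _ ≤ 2 * (1+s) ^ β := by
              have h3 : (2:ℝ) ^ β ≤ 2 := by
                calc (2:ℝ) ^ β ≤ 2 ^ (1:ℝ) := rpow_le_rpow_of_exponent_le one_le_two hβ2.le
                  _ = 2 := rpow_one 2
              exact mul_le_mul_of_nonneg_right h3 (rpow_pos_of_pos h1s β).le
    exact mul_le_mul_of_nonneg_left key hc₀.le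
  have h := intervalIntegral.integral_mono_on (μ := volume) hr1
    (alpha_intble hs hr1) intervalIntegrable_const hpt
  calc (∫ u in s..r, c₀ * (1 + u) ^ β) ≤ ∫ _ in s..r, c₀ * (2 * (1+s) ^ β) := h
    _ = (r - s) * (c₀ * (2 * (1+s) ^ β)) := by
        rw [intervalIntegral.integral_const]; simp [smul_eq_mul]
    _ ≤ (1+s) ^ (-β) * (c₀ * (2 * (1+s) ^ β)) := by
        have : r - s ≤ (1+s) ^ (-β) := by linarith
        exact mul_le_mul_of_nonneg_right this (by positivity)
    _ = 2 * c₀ * ((1+s) ^ (-β) * (1+s) ^ β) := by ring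
    _ = 2 * c₀ := by rw [← rpow_add h1s]; simp

end Aux2



lemma intExpNegF {c₀ β : ℝ} (hc₀ : 0 < c₀) (hβ1 : -1 < β) {a : ℝ} (ha : 0 ≤ a) :
    IntegrableOn (fun r : ℝ => exp (-Fa c₀ β r)) (Ioi a) := by
  have hγ : (0:ℝ) < 1 + β := by linarith
  have hc : 0 < c₀ / (1 + β) := by positivity
  have hcont : ContinuousOn (fun r : ℝ => exp (-Fa c₀ β r)) (Ici a) := by
    apply Real.continuous_exp.comp_continuousOn
    apply ContinuousOn.neg
    apply ContinuousOn.mul continuousOn_const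
    apply ContinuousOn.rpow_const (by fun_prop)
    intro x hx
    have : (0:ℝ) < 1 + x := by have := mem_Ici.mp hx; linarith
    exact Or.inl this.ne'
  have htend : Tendsto (fun r : ℝ => (1 + r) ^ (1 + β)) atTop atTop := by
    apply (tendsto_rpow_atTop hγ).comp
    exact tendsto_atTop_add_const_left _ 1 tendsto_id
  have hlittle := (isLittleO_exp_neg_mul_rpow_atTop hc (-2 / (1 + β))).comp_tendsto htend
  have hbigO : (fun r : ℝ => exp (-Fa c₀ β r)) =O[atTop] fun r : ℝ => r ^ (-2 : ℝ) := by
    have e1 : (fun r : ℝ => exp (-Fa c₀ β r))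
        =ᶠ[atTop] fun r => exp (-(c₀ / (1 + β)) * (1 + r) ^ (1 + β)) := by
      filter_upwards with r
      simp [Fa, neg_mul]
    have e2 : (fun r : ℝ => ((1 + r) ^ (1 + β)) ^ (-2 / (1 + β)))
        =ᶠ[atTop] fun r : ℝ => (1 + r) ^ (-2 : ℝ) := by
      filter_upwards [eventually_ge_atTop (0:ℝ)] with r hr
      rw [← Real.rpow_mul (by linarith : (0:ℝ) ≤ 1 + r)]
      congr 1
      field_simp
    have h3 : (fun r : ℝ => exp (-Fa c₀ β r)) =o[atTop] fun r : ℝ => (1 + r) ^ (-2 : ℝ) :=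
      hlittle.congr' e1.symm e2
    have h4 : (fun r : ℝ => (1 + r) ^ (-2 : ℝ)) =O[atTop] fun r : ℝ => r ^ (-2 : ℝ) := by
      apply Asymptotics.IsBigO.of_bound 1
      filter_upwards [eventually_ge_atTop (1:ℝ)] with r hr
      have h1r : (0:ℝ) < r := by linarith
      rw [one_mul, Real.norm_eq_abs, Real.norm_eq_abs, abs_of_nonneg (rpow_nonneg (by linarith) _),
        abs_of_nonneg (rpow_nonneg h1r.le _)]
      exact rpow_le_rpow_of_nonpos h1r (by linarith) (by norm_num)
    exact (h3.trans_isBigO h4).isBigO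
  have hcomp : IntegrableAtFilter (fun r : ℝ => r ^ (-2:ℝ)) atTop (volume : Measure ℝ) :=
    ⟨Ioi 1, Ioi_mem_atTop 1, integrableOn_Ioi_rpow_of_lt (by norm_num) one_pos⟩
  have := (hcont.locallyIntegrableOn measurableSet_Ici).integrableOn_of_isBigO_atTop hbigO hcomp
  exact this.mono_set Ioi_subset_Ici_self


lemma expDecay_deriv {b s : ℝ} (hb : 0 < b) (r : ℝ) :
    HasDerivAt (fun r : ℝ => -(exp (-(b * (r - s))) / b)) (exp (-(b * (r - s)))) r := by
  have h := (((hasDerivAt_id r).sub_const s).const_mul b).neg.exp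
  have h2 := (h.div_const b).neg
  refine h2.congr_deriv ?_
  simp only [Pi.neg_apply, id_eq]
  field_simp

lemma expDecay_tendsto {b s : ℝ} (hb : 0 < b) :
    Tendsto (fun r : ℝ => -(exp (-(b * (r - s))) / b)) atTop (nhds 0) := by
  have h : Tendsto (fun r : ℝ => -(b * (r - s))) atTop atBot := by
    have h0 : Tendsto (fun r : ℝ => r - s) atTop atTop :=
      tendsto_atTop_add_const_right _ (-s) tendsto_id
    have h1 := tendsto_neg_atBot_iff.mpr (h0.const_mul_atTop hb)
    simpa using h1
  have := (Real.tendsto_exp_atBot.comp h).div_const b |>.neg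
  simpa using this

lemma int_exp_decay {b s : ℝ} (hb : 0 < b) :
    IntegrableOn (fun r : ℝ => exp (-(b * (r - s)))) (Ioi s) ∧
    (∫ r in Ioi s, exp (-(b * (r - s)))) = 1 / b := by
  have hderiv : ∀ x ∈ Ici s, HasDerivAt (fun r : ℝ => -(exp (-(b * (r - s))) / b))
      (exp (-(b * (x - s)))) x := fun x _ => expDecay_deriv hb x
  have hpos : ∀ x ∈ Ioi s, 0 ≤ exp (-(b * (x - s))) := fun x _ => (exp_pos _).le
  refine ⟨integrableOn_Ioi_deriv_of_nonneg' hderiv hpos (expDecay_tendsto hb), ?_⟩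
  rw [integral_Ioi_of_hasDerivAt_of_nonneg' hderiv hpos (expDecay_tendsto hb)]
  simp [hb.ne']

lemma int_inv_sq {s : ℝ} (hs : 0 ≤ s) :
    IntegrableOn (fun r : ℝ => ((r - s) ^ 2)⁻¹) (Ioi (2 * s + 1)) ∧
    (∫ r in Ioi (2 * s + 1), ((r - s) ^ 2)⁻¹) = (1 + s)⁻¹ := by
  have hderiv : ∀ x ∈ Ici (2 * s + 1), HasDerivAt (fun r : ℝ => -(r - s)⁻¹)
      (((x - s) ^ 2)⁻¹) x := by
    intro x hx
    have hne : x - s ≠ 0 := by have := mem_Ici.mp hx; nlinarith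
    have h := ((hasDerivAt_id x).sub_const s).inv hne
    have h2 := h.neg
    refine h2.congr_deriv ?_
    simp only [id_eq]
    field_simp
  have hpos : ∀ x ∈ Ioi (2 * s + 1), 0 ≤ ((x - s) ^ 2)⁻¹ := fun x _ => by positivity
  have htend : Tendsto (fun r : ℝ => -(r - s)⁻¹) atTop (nhds 0) := by
    have := (tendsto_inv_atTop_zero.comp (tendsto_atTop_add_const_right _ (-s) tendsto_id)).neg
    simpa [sub_eq_add_neg] using this
  refine ⟨integrableOn_Ioi_deriv_of_nonneg' hderiv hpos htend, ?_⟩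
  rw [integral_Ioi_of_hasDerivAt_of_nonneg' hderiv hpos htend]
  have : 2 * s + 1 - s = 1 + s := by ring
  rw [this]
  ring



section A
variable {c₀ β : ℝ}



lemma phi_eq : (fun r : ℝ => exp (Fa c₀ β s - Fa c₀ β r))
    = fun r : ℝ => exp (Fa c₀ β s) * exp (-Fa c₀ β r) := by
  funext r; rw [sub_eq_add_neg, exp_add]

lemma phi_integrable (hc₀ : 0 < c₀) (hβ1 : -1 < β) {s a : ℝ} (ha : 0 ≤ a) :
    IntegrableOn (fun r : ℝ => exp (Fa c₀ β s - Fa c₀ β r)) (Ioi a) := by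
  rw [phi_eq]
  exact (intExpNegF hc₀ hβ1 ha).const_mul _

lemma min_head (hβ1 : -1 < β) (hβ2 : β < 1) {s r : ℝ} (hs : 0 ≤ s) (hr1 : s ≤ r)
    (hr2 : r ≤ 2*s+1) : (1/2) * (1+s) ^ β ≤ min ((1+s) ^ β) ((1+r) ^ β) := by
  have h1s : (0:ℝ) < 1 + s := by linarith
  have h1r : (0:ℝ) < 1 + r := by linarith
  refine le_min (by nlinarith [rpow_pos_of_pos h1s β]) ?_
  rcases le_or_gt 0 β with hb | hb
  · have := rpow_le_rpow h1s.le (by linarith : 1+s ≤ 1+r) hb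
    nlinarith [rpow_pos_of_pos h1s β]
  · have h2 : (1+r) ^ β ≥ (2*(1+s)) ^ β :=
      rpow_le_rpow_of_nonpos h1r (by linarith) hb.le
    have h3 : (2*(1+s)) ^ β = 2 ^ β * (1+s) ^ β := mul_rpow (by norm_num) h1s.le
    have h4 : (1/2 : ℝ) ≤ 2 ^ β := by
      have := rpow_le_rpow_of_exponent_le (x := 2) one_le_two hβ1.le
      rw [rpow_neg_one] at this
      linarith
    have h5 := rpow_pos_of_pos h1s β
    nlinarith

lemma min_tail (hβ1 : -1 < β) (hβ2 : β < 1) {s r : ℝ} (hs : 0 ≤ s) (hr : 2*s+1 ≤ r) :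
    (1/2) * (r-s) ^ (min (1+β) 1) ≤ min ((1+s) ^ β) ((1+r) ^ β) * (r - s) := by
  have h1s : (0:ℝ) < 1 + s := by linarith
  have h1r : (0:ℝ) < 1 + r := by linarith
  have hw1 : (1:ℝ) ≤ r - s := by linarith
  have hw0 : (0:ℝ) < r - s := by linarith
  rcases le_or_gt 0 β with hb | hb
  · rw [min_eq_right (by linarith : (1:ℝ) ≤ 1 + β), rpow_one]
    have hA : (1:ℝ) ≤ (1+s) ^ β := by
      have := rpow_le_rpow_of_exponent_le (by linarith : (1:ℝ) ≤ 1+s) hb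
      rwa [rpow_zero] at this
    have hB : (1:ℝ) ≤ (1+r) ^ β := by
      have := rpow_le_rpow_of_exponent_le (by linarith : (1:ℝ) ≤ 1+r) hb
      rwa [rpow_zero] at this
    have : (1/2 : ℝ) ≤ min ((1+s) ^ β) ((1+r) ^ β) := le_min (by linarith) (by linarith)
    nlinarith
  · rw [min_eq_left (by linarith : 1 + β ≤ (1:ℝ))]
    have hsplit : (r-s) ^ (1+β) = (r-s) * (r-s) ^ β := by
      rw [rpow_add hw0, rpow_one]
    have hA : (r-s) ^ β ≤ (1+s) ^ β :=
      rpow_le_rpow_of_nonpos h1s (by linarith) hb.le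
    have hB : (1/2) * (r-s) ^ β ≤ (1+r) ^ β := by
      have h2 : (1+r) ^ β ≥ (2*(r-s)) ^ β :=
        rpow_le_rpow_of_nonpos h1r (by linarith) hb.le
      have h3 : (2*(r-s)) ^ β = 2 ^ β * (r-s) ^ β := mul_rpow (by norm_num) hw0.le
      have h4 : (1/2 : ℝ) ≤ 2 ^ β := by
        have := rpow_le_rpow_of_exponent_le (x := 2) one_le_two hβ1.le
        rw [rpow_neg_one] at this
        linarith
      have h5 := rpow_pos_of_pos hw0 β
      nlinarith
    have hmin : (1/2) * (r-s) ^ β ≤ min ((1+s) ^ β) ((1+r) ^ β) := by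
      refine le_min ?_ hB
      have h5 := rpow_pos_of_pos hw0 β
      nlinarith
    calc (1/2) * (r-s) ^ (1+β) = ((1/2) * (r-s) ^ β) * (r - s) := by rw [hsplit]; ring
      _ ≤ _ := mul_le_mul_of_nonneg_right hmin hw0.le

lemma lam_lower (hc₀ : 0 < c₀) (hβ1 : -1 < β) (hβ2 : β < 1) {s : ℝ} (hs : 0 ≤ s) :
    exp (-(2*c₀)) * (1+s) ^ (-β) ≤ ∫ r in Ioi s, exp (Fa c₀ β s - Fa c₀ β r) := by
  have h1s : (0:ℝ) < 1 + s := by linarith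
  set δ := (1+s) ^ (-β) with hδdef
  have hδ : 0 < δ := rpow_pos_of_pos h1s _
  have hInt := phi_integrable (s := s) hc₀ hβ1 hs
  have step1 : (∫ r in Ioc s (s+δ), exp (Fa c₀ β s - Fa c₀ β r))
      ≤ ∫ r in Ioi s, exp (Fa c₀ β s - Fa c₀ β r) := by
    apply setIntegral_mono_set hInt
    · filter_upwards with r using (exp_pos _).le
    · filter_upwards with r hr using Ioc_subset_Ioi_self hr
  have step2 : exp (-(2*c₀)) * δ ≤ ∫ r in Ioc s (s+δ), exp (Fa c₀ β s - Fa c₀ β r) := by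
    have hconst : (∫ _ in Ioc s (s+δ), exp (-(2*c₀))) = exp (-(2*c₀)) * δ := by
      rw [setIntegral_const, Real.volume_real_Ioc_of_le (by linarith), smul_eq_mul]
      ring_nf
    rw [← hconst]
    apply setIntegral_mono_on
      (integrableOn_const measure_Ioc_lt_top.ne)
      (hInt.mono_set Ioc_subset_Ioi_self) measurableSet_Ioc
    intro r hr
    apply exp_le_exp.mpr
    have := inner_le hc₀ hβ1 hβ2 hs hr.1.le (by linarith [hr.2])
    linarith
  linarith

lemma lam_upper (hc₀ : 0 < c₀) (hβ1 : -1 < β) (hβ2 : β < 1) {s : ℝ} (hs : 0 ≤ s) :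
    (∫ r in Ioi s, exp (Fa c₀ β s - Fa c₀ β r))
      ≤ (2/c₀ + (Nat.factorial (Nat.ceil (2 / min (1+β) 1)) : ℝ) * (2/c₀) ^ (Nat.ceil (2 / min (1+β) 1)))
        * (1+s) ^ (-β) := by
  have h1s : (0:ℝ) < 1 + s := by linarith
  set γ' := min (1+β) 1 with hγ'def
  have hγ' : 0 < γ' := lt_min (by linarith) one_pos
  set n := Nat.ceil (2 / γ') with hndef
  set K := (Nat.factorial n : ℝ) * (2/c₀) ^ n with hKdef
  have hK : 0 < K := by positivity
  set b := c₀/2 * (1+s) ^ β with hbdef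
  have hb : 0 < b := by have := rpow_pos_of_pos h1s β; positivity
  have hInt := phi_integrable (s := s) hc₀ hβ1 hs
  have hsβ := rpow_pos_of_pos h1s β
  have hsnegβ := rpow_pos_of_pos h1s (-β)
  -- split
  have hsplit : (∫ r in Ioi s, exp (Fa c₀ β s - Fa c₀ β r))
      = (∫ r in Ioc s (2*s+1), exp (Fa c₀ β s - Fa c₀ β r))
        + ∫ r in Ioi (2*s+1), exp (Fa c₀ β s - Fa c₀ β r) := by
    rw [← setIntegral_union (Ioc_disjoint_Ioi le_rfl) measurableSet_Ioi
      (hInt.mono_set Ioc_subset_Ioi_self)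
      (hInt.mono_set (Ioi_subset_Ioi (by linarith))),
      Ioc_union_Ioi_eq_Ioi (by linarith)]
  -- head
  have head : (∫ r in Ioc s (2*s+1), exp (Fa c₀ β s - Fa c₀ β r)) ≤ 2/c₀ * (1+s) ^ (-β) := by
    have hψint := (int_exp_decay (s := s) hb).1
    have h1 : (∫ r in Ioc s (2*s+1), exp (Fa c₀ β s - Fa c₀ β r))
        ≤ ∫ r in Ioc s (2*s+1), exp (-(b * (r - s))) := by
      apply setIntegral_mono_on (hInt.mono_set Ioc_subset_Ioi_self)
        (hψint.mono_set Ioc_subset_Ioi_self) measurableSet_Ioc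
      intro r hr
      apply exp_le_exp.mpr
      have hcore := core_lower hc₀ hβ1 hs hr.1.le
      have hmin := min_head hβ1 hβ2 hs hr.1.le hr.2
      have : b * (r - s) ≤ c₀ * min ((1+s) ^ β) ((1+r) ^ β) * (r - s) := by
        apply mul_le_mul_of_nonneg_right _ (by linarith [hr.1])
        rw [hbdef]
        nlinarith
      linarith
    have h2 : (∫ r in Ioc s (2*s+1), exp (-(b * (r - s))))
        ≤ ∫ r in Ioi s, exp (-(b * (r - s))) := by
      apply setIntegral_mono_set hψint
      · filter_upwards with r using (exp_pos _).le
      · filter_upwards with r hr using Ioc_subset_Ioi_self hr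
    have h3 : (∫ r in Ioi s, exp (-(b * (r - s)))) = 1 / b := (int_exp_decay hb).2
    have h4 : 1 / b = 2/c₀ * (1+s) ^ (-β) := by
      rw [hbdef, rpow_neg h1s.le]
      field_simp
    linarith
  -- tail
  have tail : (∫ r in Ioi (2*s+1), exp (Fa c₀ β s - Fa c₀ β r)) ≤ K * (1+s) ^ (-β) := by
    have hKint := (int_inv_sq hs).1
    have h1 : (∫ r in Ioi (2*s+1), exp (Fa c₀ β s - Fa c₀ β r))
        ≤ ∫ r in Ioi (2*s+1), K * ((r - s) ^ 2)⁻¹ := by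
      apply setIntegral_mono_on (hInt.mono_set (Ioi_subset_Ioi (by linarith)))
        (hKint.const_mul K) measurableSet_Ioi
      intro r hr
      have hrr : 2*s+1 < r := hr
      have hw1 : (1:ℝ) ≤ r - s := by linarith
      have hw0 : (0:ℝ) < r - s := by linarith
      have hcore := core_lower hc₀ hβ1 hs (by linarith : s ≤ r)
      have hmin := min_tail hβ1 hβ2 hs hrr.le
      set x := c₀/2 * (r-s) ^ γ' with hxdef
      have hx : 0 < x := by have := rpow_pos_of_pos hw0 γ'; positivity
      have hFx : x ≤ Fa c₀ β r - Fa c₀ β s := by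
        have : x ≤ c₀ * (min ((1+s) ^ β) ((1+r) ^ β) * (r - s)) := by
          rw [hxdef]
          nlinarith
        nlinarith [hcore]
      have hexp : exp (Fa c₀ β s - Fa c₀ β r) ≤ exp (-x) :=
        exp_le_exp.mpr (by linarith)
      have hpow : x ^ n / (Nat.factorial n : ℝ) ≤ exp x :=
        Real.pow_div_factorial_le_exp x hx.le n
      have hexpinv : exp (-x) ≤ (Nat.factorial n : ℝ) / x ^ n := by
        rw [exp_neg]
        calc (exp x)⁻¹ ≤ (x ^ n / (Nat.factorial n : ℝ))⁻¹ := by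
              apply inv_anti₀ (by positivity) hpow
          _ = (Nat.factorial n : ℝ) / x ^ n := by rw [inv_div]
      have hxn_ge : (c₀/2) ^ n * (r-s) ^ 2 ≤ x ^ n := by
        have hpow2 : ((r-s) ^ γ') ^ n = (r-s) ^ (γ' * n) := by
          rw [← rpow_natCast ((r-s) ^ γ') n, ← rpow_mul hw0.le]
        have h2n : (2:ℝ) ≤ γ' * n := by
          have hle := Nat.le_ceil (2 / γ')
          calc (2:ℝ) = γ' * (2 / γ') := by field_simp
            _ ≤ γ' * n := by
                apply mul_le_mul_of_nonneg_left _ hγ'.le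
                exact_mod_cast hle
        have hge : (r-s) ^ (2:ℝ) ≤ (r-s) ^ (γ' * n) :=
          rpow_le_rpow_of_exponent_le hw1 h2n
        have h2cast : (r-s) ^ (2:ℝ) = (r-s) ^ (2:ℕ) := by
          rw [← rpow_natCast (r-s) 2]; norm_num
        have : x ^ n = (c₀/2) ^ n * ((r-s) ^ γ') ^ n := by rw [hxdef, mul_pow]
        rw [this, hpow2]
        have hc2 : (0:ℝ) < (c₀/2) ^ n := by positivity
        rw [← h2cast] at *
        exact mul_le_mul_of_nonneg_left hge hc2.le
      have hfin : (Nat.factorial n : ℝ) / x ^ n ≤ K * ((r - s) ^ 2)⁻¹ := by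
        have h1' : (Nat.factorial n : ℝ) / x ^ n
            ≤ (Nat.factorial n : ℝ) / ((c₀/2) ^ n * (r-s) ^ 2) := by
          apply div_le_div_of_nonneg_left (by positivity) (by positivity) hxn_ge
        have h2' : (Nat.factorial n : ℝ) / ((c₀/2) ^ n * (r-s) ^ 2)
            = K * ((r - s) ^ 2)⁻¹ := by
          rw [hKdef]
          rw [div_pow, div_pow]
          field_simp
        linarith
      calc exp (Fa c₀ β s - Fa c₀ β r) ≤ exp (-x) := hexp
        _ ≤ (Nat.factorial n : ℝ) / x ^ n := hexpinv
        _ ≤ K * ((r - s) ^ 2)⁻¹ := hfin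
    have h2 : (∫ r in Ioi (2*s+1), K * ((r - s) ^ 2)⁻¹) = K * (1+s)⁻¹ := by
      rw [integral_const_mul, (int_inv_sq hs).2]
    have h3 : K * (1+s)⁻¹ ≤ K * (1+s) ^ (-β) := by
      apply mul_le_mul_of_nonneg_left _ hK.le
      calc (1+s)⁻¹ = (1+s) ^ (-1:ℝ) := (rpow_neg_one _).symm
        _ ≤ (1+s) ^ (-β) := rpow_le_rpow_of_exponent_le (by linarith) (by linarith)
    linarith
  rw [hsplit, add_mul]
  linarith



section A
variable {c₀ β : ℝ}



/-- auxiliary antitone primitive -/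
noncomputable def Haux (c₀ β : ℝ) : ℝ → ℝ :=
  fun s => ∫ r in Ioi (max s 0), exp (-Fa c₀ β r)

lemma Haux_antitone (hc₀ : 0 < c₀) (hβ1 : -1 < β) : Antitone (Haux c₀ β) := by
  intro s₁ s₂ h
  apply setIntegral_mono_set (intExpNegF hc₀ hβ1 (le_max_right s₁ 0))
  · filter_upwards with r using (exp_pos _).le
  · filter_upwards with r hr using Ioi_subset_Ioi (max_le_max h le_rfl) hr

lemma Haux_nonneg (c₀ β : ℝ) (s : ℝ) : 0 ≤ Haux c₀ β s :=
  setIntegral_nonneg measurableSet_Ioi (fun r _ => (exp_pos _).le)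

lemma lam_formula (hc₀ : 0 < c₀) (hβ1 : -1 < β) {s : ℝ} (hs : 0 ≤ s) :
    (∫ r in Ioi s, exp (-∫ u in s..r, c₀ * (1 + u) ^ β))
      = exp (Fa c₀ β s) * Haux c₀ β s := by
  have h1 : (∫ r in Ioi s, exp (-∫ u in s..r, c₀ * (1 + u) ^ β))
      = ∫ r in Ioi s, exp (Fa c₀ β s - Fa c₀ β r) := by
    apply setIntegral_congr_fun measurableSet_Ioi
    intro r hr
    show exp (-∫ u in s..r, c₀ * (1 + u) ^ β) = exp (Fa c₀ β s - Fa c₀ β r)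
    rw [inner_eq hβ1 hs (le_of_lt hr), neg_sub]
  rw [h1, phi_eq, integral_const_mul, Haux, max_eq_left hs]

lemma weight_intble {β A : ℝ} (hA : 0 ≤ A) :
    IntervalIntegrable (fun s : ℝ => (1+s) ^ (-β)) volume 0 A := by
  apply ContinuousOn.intervalIntegrable
  apply ContinuousOn.rpow_const (by fun_prop)
  intro x hx
  rw [uIcc_of_le hA] at hx
  have : (0:ℝ) < 1 + x := by have := hx.1; linarith
  exact Or.inl this.ne'

lemma weight_integral (hβ1 : -1 < β) (hβ2 : β < 1) {A : ℝ} (hA : 0 ≤ A) :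
    (∫ s in (0:ℝ)..A, (1+s) ^ (-β)) = ((1+A) ^ (1-β) - 1) / (1-β) := by
  have hne : (1:ℝ) - β ≠ 0 := by linarith
  have hderiv : ∀ x ∈ uIcc (0:ℝ) A,
      HasDerivAt (fun s : ℝ => (1+s) ^ (1-β) / (1-β)) ((1+x) ^ (-β)) x := by
    intro x hx
    rw [uIcc_of_le hA] at hx
    have h1 : (0:ℝ) < 1 + x := by have := hx.1; linarith
    have h := (((hasDerivAt_id x).const_add 1).rpow_const (p := 1-β) (Or.inl h1.ne'))
    have h2 := h.div_const (1-β)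
    refine h2.congr_deriv ?_
    have : 1 - β - 1 = -β := by ring
    rw [this]
    simp only [id_eq]
    field_simp
  rw [intervalIntegral.integral_eq_sub_of_hasDerivAt hderiv (weight_intble hA)]
  rw [show (1:ℝ) + 0 = 1 by ring, Real.one_rpow]
  ring

end A

theorem stmt_12 (c₀ β T : ℝ) (hc₀ : 0 < c₀) (hβ : β ∈ Set.Ioo (-1:ℝ) 1) (hT : 0 < T)
    (α Λ : ℝ → ℝ)
    (hα : ∀ t, α t = c₀ * (1 + t) ^ β)
    (hΛ : ∀ s, Λ s = ∫ r in Set.Ioi s, Real.exp (- ∫ u in s..r, α u)) :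
    ∃ c₁ c₂ : ℝ, 0 < c₁ ∧ c₁ ≤ c₂ ∧ ∀ ε ∈ Set.Ioc (0:ℝ) 1,
      c₁ * ε ^ (1 + β) ≤ ε ^ 2 * (∫ s in (0:ℝ)..(T / ε), Λ s) ∧
      ε ^ 2 * (∫ s in (0:ℝ)..(T / ε), Λ s) ≤ c₂ * ε ^ (1 + β) := by
  obtain ⟨hβ1, hβ2⟩ := hβ
  have hαf : α = fun u => c₀ * (1 + u) ^ β := funext hα
  set Cl : ℝ := exp (-(2*c₀)) with hCldef
  set Cu : ℝ := 2/c₀ + (Nat.factorial (Nat.ceil (2 / min (1+β) 1)) : ℝ)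
      * (2/c₀) ^ (Nat.ceil (2 / min (1+β) 1)) with hCudef
  have hCl : 0 < Cl := exp_pos _
  have hCu : 0 < Cu := by positivity
  have h1T : (1:ℝ) < 1 + T := by linarith
  set κ : ℝ := 1 - (1+T) ^ (β-1) with hκdef
  have hκ : 0 < κ := by
    have := rpow_lt_one_of_one_lt_of_neg h1T (by linarith : β - 1 < 0)
    simp only [hκdef]; linarith
  have h1β : (0:ℝ) < 1 - β := by linarith
  have hmain : ∀ ε ∈ Set.Ioc (0:ℝ) 1,
      Cl * κ * T ^ (1-β) / (1-β) * ε ^ (1 + β) ≤ ε ^ 2 * (∫ s in (0:ℝ)..(T / ε), Λ s) ∧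
      ε ^ 2 * (∫ s in (0:ℝ)..(T / ε), Λ s) ≤ Cu * (1+T) ^ (1-β) / (1-β) * ε ^ (1 + β) := by
    intro ε hε
    obtain ⟨hε0, hε1⟩ := hε
    set X := T / ε with hXdef
    have hX0 : 0 < X := by positivity
    have hXT : T ≤ X := by
      rw [hXdef, le_div_iff₀ hε0]
      nlinarith
    -- Λ equals the nice function on [0, X]
    have hΛeq : ∀ s ∈ Icc (0:ℝ) X, Λ s = exp (Fa c₀ β s) * Haux c₀ β s := by
      intro s hs
      rw [hΛ s, hαf, lam_formula hc₀ hβ1 hs.1]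
    -- integrability of Λ on [0, X]
    have hΛint : IntervalIntegrable Λ volume 0 X := by
      rw [intervalIntegrable_iff_integrableOn_Ioc_of_le hX0.le]
      have hg : IntegrableOn (fun s => exp (Fa c₀ β s) * Haux c₀ β s) (Ioc 0 X) := by
        apply Integrable.mono' (g := fun _ => Cu * ((1+X) ^ (-β) + 1))
          (integrableOn_const measure_Ioc_lt_top.ne)
        · apply AEMeasurable.aestronglyMeasurable
          apply AEMeasurable.mul
          · have hcont : ContinuousOn (fun s => exp (Fa c₀ β s)) (Ioc 0 X) := by
              apply Real.continuous_exp.comp_continuousOn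
              apply ContinuousOn.mul continuousOn_const
              apply ContinuousOn.rpow_const (by fun_prop)
              intro x hx
              have : (0:ℝ) < 1 + x := by have := hx.1; linarith
              exact Or.inl this.ne'
            exact hcont.aemeasurable measurableSet_Ioc
          · exact ((Haux_antitone hc₀ hβ1).measurable).aemeasurable
        · filter_upwards [ae_restrict_mem measurableSet_Ioc] with s hs
          have hs0 : (0:ℝ) ≤ s := hs.1.le
          have h1 : exp (Fa c₀ β s) * Haux c₀ β s
              = ∫ r in Ioi s, exp (Fa c₀ β s - Fa c₀ β r) := by
            rw [phi_eq, integral_const_mul, Haux, max_eq_left hs0]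
          have h2 := lam_upper hc₀ hβ1 hβ2 hs0
          have h3 : (0:ℝ) ≤ exp (Fa c₀ β s) * Haux c₀ β s :=
            mul_nonneg (exp_pos _).le (Haux_nonneg _ _ _)
          rw [Real.norm_eq_abs, abs_of_nonneg h3, h1]
          refine le_trans h2 ?_
          have h4 : (1+s) ^ (-β) ≤ (1+X) ^ (-β) + 1 := by
            rcases le_or_gt (-β) 0 with hb | hb
            · have : (1+s) ^ (-β) ≤ 1 :=
                rpow_le_one_of_one_le_of_nonpos (by linarith) hb
              have := rpow_pos_of_pos (by linarith : (0:ℝ) < 1+X) (-β)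
              linarith
            · have : (1+s) ^ (-β) ≤ (1+X) ^ (-β) :=
                rpow_le_rpow (by linarith) (by linarith [hs.2]) hb.le
              linarith
          exact mul_le_mul_of_nonneg_left h4 hCu.le
      exact hg.congr_fun (fun s hs => (hΛeq s ⟨hs.1.le, hs.2⟩).symm) measurableSet_Ioc
    -- comparisons
    have hlow : (∫ s in (0:ℝ)..X, Cl * (1+s) ^ (-β)) ≤ ∫ s in (0:ℝ)..X, Λ s := by
      apply intervalIntegral.integral_mono_on hX0.le
        ((weight_intble hX0.le).const_mul Cl) hΛint
      intro s hs
      rw [hΛeq s hs]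
      have h1 : exp (Fa c₀ β s) * Haux c₀ β s
          = ∫ r in Ioi s, exp (Fa c₀ β s - Fa c₀ β r) := by
        rw [phi_eq, integral_const_mul, Haux, max_eq_left hs.1]
      rw [h1]
      exact lam_lower hc₀ hβ1 hβ2 hs.1
    have hup : (∫ s in (0:ℝ)..X, Λ s) ≤ ∫ s in (0:ℝ)..X, Cu * (1+s) ^ (-β) := by
      apply intervalIntegral.integral_mono_on hX0.le hΛint
        ((weight_intble hX0.le).const_mul Cu)
      intro s hs
      rw [hΛeq s hs]
      have h1 : exp (Fa c₀ β s) * Haux c₀ β s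
          = ∫ r in Ioi s, exp (Fa c₀ β s - Fa c₀ β r) := by
        rw [phi_eq, integral_const_mul, Haux, max_eq_left hs.1]
      rw [h1]
      exact lam_upper hc₀ hβ1 hβ2 hs.1
    set D : ℝ := ((1+X) ^ (1-β) - 1) / (1-β) with hDdef
    have hweight : (∫ s in (0:ℝ)..X, (1+s) ^ (-β)) = D := weight_integral hβ1 hβ2 hX0.le
    have hJl : Cl * D ≤ ∫ s in (0:ℝ)..X, Λ s := by
      rw [← hweight]
      rwa [intervalIntegral.integral_const_mul] at hlow
    have hJu : (∫ s in (0:ℝ)..X, Λ s) ≤ Cu * D := by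
      rw [← hweight]
      rwa [intervalIntegral.integral_const_mul] at hup
    have hP0 : (0:ℝ) < (1+X) ^ (1-β) := rpow_pos_of_pos (by linarith) _
    -- lower bound on D
    have hDl : κ / (1-β) * (1+X) ^ (1-β) ≤ D := by
      have hkey : (1:ℝ) ≤ (1+T) ^ (β-1) * (1+X) ^ (1-β) := by
        have e0 : (1+T) ^ (β-1) * (1+T) ^ (1-β) = 1 := by
          rw [← rpow_add (by linarith : (0:ℝ) < 1+T)]
          norm_num
        have e1 : (1+T) ^ (1-β) ≤ (1+X) ^ (1-β) :=
          rpow_le_rpow (by linarith) (by linarith) h1β.le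
        calc (1:ℝ) = (1+T) ^ (β-1) * (1+T) ^ (1-β) := e0.symm
          _ ≤ (1+T) ^ (β-1) * (1+X) ^ (1-β) :=
              mul_le_mul_of_nonneg_left e1 (rpow_pos_of_pos (by linarith) _).le
      rw [hDdef, hκdef, div_mul_eq_mul_div]
      apply div_le_div_of_nonneg_right _ h1β.le
      nlinarith [rpow_pos_of_pos (lt_trans one_pos h1T) (β-1), hP0]
    have hDu : D ≤ (1+X) ^ (1-β) / (1-β) := by
      rw [hDdef]
      apply div_le_div_of_nonneg_right _ h1β.le
      linarith
    -- exponent arithmetic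
    have he2 : (ε:ℝ) ^ (2:ℕ) = ε ^ ((2:ℕ):ℝ) := (rpow_natCast ε 2).symm
    have heps : ε ^ (2:ℕ) * ε ^ (β-1) = ε ^ (1+β) := by
      rw [he2, ← rpow_add hε0]
      congr 1
      push_cast
      ring
    have hXrpow : X ^ (1-β) = T ^ (1-β) * ε ^ (β-1) := by
      rw [hXdef, div_rpow hT.le hε0.le, div_eq_mul_inv, ← rpow_neg hε0.le]
      congr 1
      ring
    constructor
    · -- lower
      have step1 : Cl * κ * T ^ (1-β) / (1-β) * ε ^ (1+β)
          = Cl * (κ / (1-β) * X ^ (1-β)) * ε ^ (2:ℕ) := by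
        rw [← heps, hXrpow]
        field_simp
      rw [step1]
      have step2 : Cl * (κ / (1-β) * X ^ (1-β)) ≤ Cl * D := by
        apply mul_le_mul_of_nonneg_left _ hCl.le
        refine le_trans ?_ hDl
        apply mul_le_mul_of_nonneg_left _ (by positivity)
        exact rpow_le_rpow hX0.le (by linarith) h1β.le
      calc Cl * (κ / (1-β) * X ^ (1-β)) * ε ^ (2:ℕ)
          ≤ Cl * D * ε ^ (2:ℕ) := mul_le_mul_of_nonneg_right step2 (by positivity)
        _ ≤ (∫ s in (0:ℝ)..X, Λ s) * ε ^ (2:ℕ) :=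
            mul_le_mul_of_nonneg_right hJl (by positivity)
        _ = ε ^ 2 * ∫ s in (0:ℝ)..X, Λ s := by ring
    · -- upper
      have hXup : (1:ℝ) + X ≤ (1+T) / ε := by
        rw [hXdef, le_div_iff₀ hε0]
        have : ε * (1 + T/ε) = ε + T := by field_simp
        nlinarith [this]
      have hPu : (1+X) ^ (1-β) ≤ (1+T) ^ (1-β) * ε ^ (β-1) := by
        have h1 : (1+X) ^ (1-β) ≤ ((1+T)/ε) ^ (1-β) :=
          rpow_le_rpow (by linarith) hXup h1β.le
        have h2 : ((1+T)/ε) ^ (1-β) = (1+T) ^ (1-β) * ε ^ (β-1) := by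
          rw [div_rpow (by linarith) hε0.le, div_eq_mul_inv, ← rpow_neg hε0.le]
          congr 1
          ring
        linarith [h2 ▸ h1]
      have step1 : ε ^ 2 * (∫ s in (0:ℝ)..X, Λ s) ≤ ε ^ (2:ℕ) * (Cu * ((1+X) ^ (1-β) / (1-β))) := by
        have := le_trans hJu (mul_le_mul_of_nonneg_left hDu hCu.le)
        exact mul_le_mul_of_nonneg_left this (by positivity)
      refine le_trans step1 ?_
      have step2 : ε ^ (2:ℕ) * (Cu * ((1+X) ^ (1-β) / (1-β)))
          ≤ ε ^ (2:ℕ) * (Cu * ((1+T) ^ (1-β) * ε ^ (β-1) / (1-β))) := by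
        apply mul_le_mul_of_nonneg_left _ (by positivity)
        apply mul_le_mul_of_nonneg_left _ hCu.le
        apply div_le_div_of_nonneg_right hPu h1β.le
      refine le_trans step2 (le_of_eq ?_)
      rw [← heps]
      field_simp
  refine ⟨Cl * κ * T ^ (1-β) / (1-β), Cu * (1+T) ^ (1-β) / (1-β), by positivity, ?_, hmain⟩
  have h1 := hmain 1 ⟨one_pos, le_rfl⟩
  rw [Real.one_rpow] at h1
  obtain ⟨ha, hb⟩ := h1
  simp only [mul_one, one_pow, one_mul] at ha hb
  linarith
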